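/- arXiv:1906.05988 — 2 statements merged into one kernel-verified Lean document; each statement's English description precedes it below -/
import Mathlib

section
/- For any bounded Borel functions V1, V2 : Δ(S) → ℝ and every b ∈ Δ(S), |(LV1)(b) − (LV2)(b)| ≤ β · sup_{b' ∈ Δ(S)} |V1(b') − V2(b')|. Consequently, for 0 < β < 1 the distributionally robust Bellman operator L is a contraction with modulus β with respect to the supremum distance on bounded Borel functions on Δ(S). -/
open MeasureTheory

section Defs

variable {S Z A : Type*}

/-- Observation weight `n_z(b,p) = Σ_s Σ_{s'} p_s(s',z) b_s`. -/
def obsW [Fintype S] (b : S → ℝ) (p : S → (S × Z) → ℝ) (z : Z) : ℝ :=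
  ∑ s, ∑ s', p s (s', z) * b s

/-- Bayesian belief update `f(b,p,z)`. -/
noncomputable def bUpd [Fintype S] (b : S → ℝ) (p : S → (S × Z) → ℝ) (z : Z) : S → ℝ :=
  fun s' => (∑ s, p s (s', z) * b s) / obsW b p z

/-- The support set `X̃_{as}`. -/
def XasSet [Fintype S] [Fintype Z] (pbar : (S × Z) → ℝ) :
    Set (((S × Z) → ℝ) × ((S × Z) → ℝ)) :=
  {x | (∀ i, x.1 i - pbar i ≤ x.2 i) ∧ (∀ i, pbar i - x.1 i ≤ x.2 i) ∧
       x.1 ∈ stdSimplex ℝ (S × Z)}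

/-- The box uncertainty set `B_{as}`. -/
def BasSet [Fintype S] [Fintype Z] (pbar c : (S × Z) → ℝ) : Set ((S × Z) → ℝ) :=
  {p | p ∈ stdSimplex ℝ (S × Z) ∧ ∀ i, |p i - pbar i| ≤ c i}

/-- The ambiguity set `D̃_{as}`. -/
def DasSet [Fintype S] [Fintype Z] (pbar c : (S × Z) → ℝ) :
    Set (Measure (((S × Z) → ℝ) × ((S × Z) → ℝ))) :=
  {μ | IsProbabilityMeasure μ ∧ μ (XasSet pbar) = 1 ∧
       Integrable (fun x => x.2) μ ∧ (∫ x, x.2 ∂μ) = c}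

/-- The product ambiguity set `D̃_a = ⊗_s D̃_{as}`. -/
def DaSet [Fintype S] [Fintype Z] (pbar c : S → (S × Z) → ℝ) :
    Set (Measure (S → ((S × Z) → ℝ) × ((S × Z) → ℝ))) :=
  {μ | ∃ ν : S → Measure (((S × Z) → ℝ) × ((S × Z) → ℝ)),
    (∀ s, ν s ∈ DasSet (pbar s) (c s)) ∧ μ = Measure.pi ν}

/-- The term `n_z(b,p) V(f(b,p,z))`, with the convention that it is `0` when `n_z(b,p) = 0`. -/
noncomputable def bTerm [Fintype S] (V : (S → ℝ) → ℝ) (b : S → ℝ)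
    (p : S → (S × Z) → ℝ) (z : Z) : ℝ :=
  if obsW b p z = 0 then 0 else obsW b p z * V (bUpd b p z)

/-- `U_V(b,a,μ̃)`. -/
noncomputable def UVal [Fintype S] [Fintype Z] (r : A → S → ℝ) (β : ℝ)
    (V : (S → ℝ) → ℝ) (b : S → ℝ) (a : A)
    (μ : Measure (S → ((S × Z) → ℝ) × ((S × Z) → ℝ))) : ℝ :=
  ∫ x, ((∑ s, b s * r a s) + β * ∑ z, bTerm V b (fun s => (x s).1) z) ∂μ

/-- The distributionally robust Bellman operator `L`. -/
noncomputable def Lop [Fintype S] [Fintype Z] [Fintype A]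
    (pbar c : A → S → (S × Z) → ℝ) (r : A → S → ℝ) (β : ℝ)
    (V : (S → ℝ) → ℝ) (b : S → ℝ) : ℝ :=
  ⨆ a : A, sInf ((fun μ => UVal r β V b a μ) '' DaSet (pbar a) (c a))

end Defs
section Aux

open Set

variable {S Z : Type*} [Fintype S] [Fintype Z]

lemma obsW_nonneg {b : S → ℝ} {p : S → (S × Z) → ℝ}
    (hb : b ∈ stdSimplex ℝ S) (hp : ∀ s, p s ∈ stdSimplex ℝ (S × Z)) (z : Z) :
    0 ≤ obsW b p z :=
  Finset.sum_nonneg fun s _ => Finset.sum_nonneg fun s' _ =>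
    mul_nonneg ((hp s).1 _) (hb.1 s)

lemma sum_obsW {b : S → ℝ} {p : S → (S × Z) → ℝ}
    (hb : b ∈ stdSimplex ℝ S) (hp : ∀ s, p s ∈ stdSimplex ℝ (S × Z)) :
    ∑ z, obsW b p z = 1 := by
  have h : ∀ s : S, ∑ z : Z, ∑ s' : S, p s (s', z) * b s = b s := by
    intro s
    have h1 : ∑ z : Z, ∑ s' : S, p s (s', z) = 1 := by
      rw [Finset.sum_comm, ← Fintype.sum_prod_type]
      exact (hp s).2
    simp_rw [← Finset.sum_mul]
    rw [h1, one_mul]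
  unfold obsW
  rw [Finset.sum_comm]
  simp_rw [h]
  exact hb.2

lemma bUpd_mem {b : S → ℝ} {p : S → (S × Z) → ℝ} {z : Z}
    (hb : b ∈ stdSimplex ℝ S) (hp : ∀ s, p s ∈ stdSimplex ℝ (S × Z))
    (hz : obsW b p z ≠ 0) : bUpd b p z ∈ stdSimplex ℝ S := by
  have h0 : 0 ≤ obsW b p z := obsW_nonneg hb hp z
  constructor
  · intro s'
    exact div_nonneg (Finset.sum_nonneg fun s _ => mul_nonneg ((hp s).1 _) (hb.1 s)) h0
  · unfold bUpd
    rw [← Finset.sum_div]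
    have : ∑ s' : S, ∑ s : S, p s (s', z) * b s = obsW b p z := by
      unfold obsW; rw [Finset.sum_comm]
    rw [this, div_self hz]

lemma sum_bTerm_diff_le {V1 V2 : (S → ℝ) → ℝ} {b : S → ℝ} {p : S → (S × Z) → ℝ}
    (hb : b ∈ stdSimplex ℝ S) (hp : ∀ s, p s ∈ stdSimplex ℝ (S × Z))
    {K : ℝ} (hK : ∀ b' ∈ stdSimplex ℝ S, |V1 b' - V2 b'| ≤ K) :
    |∑ z, bTerm V1 b p z - ∑ z, bTerm V2 b p z| ≤ K := by
  rw [← Finset.sum_sub_distrib]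
  refine le_trans (Finset.abs_sum_le_sum_abs _ _) ?_
  have hle : ∀ z ∈ Finset.univ, |bTerm V1 b p z - bTerm V2 b p z| ≤ obsW b p z * K := by
    intro z _
    by_cases h : obsW b p z = 0
    · simp [bTerm, h]
    · simp only [bTerm, if_neg h]
      rw [← mul_sub, abs_mul, abs_of_nonneg (obsW_nonneg hb hp z)]
      exact mul_le_mul_of_nonneg_left (hK _ (bUpd_mem hb hp h)) (obsW_nonneg hb hp z)
  refine le_trans (Finset.sum_le_sum hle) ?_
  rw [← Finset.sum_mul, sum_obsW hb hp, one_mul]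

lemma measurable_obsW (b : S → ℝ) (z : Z) :
    Measurable (fun x : S → (((S × Z) → ℝ) × ((S × Z) → ℝ)) =>
      obsW b (fun s => (x s).1) z) := by
  apply Finset.measurable_sum
  intro s _
  apply Finset.measurable_sum
  intro s' _
  have hx : Measurable (fun x : S → (((S × Z) → ℝ) × ((S × Z) → ℝ)) => (x s).1 (s', z)) :=
    (measurable_fst.comp (measurable_pi_apply s)).eval
  exact hx.mul_const (b s)

lemma measurable_sum_bTerm {V : (S → ℝ) → ℝ} (hV : Measurable V) (b : S → ℝ) :
    Measurable (fun x : S → (((S × Z) → ℝ) × ((S × Z) → ℝ)) =>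
      ∑ z, bTerm V b (fun s => (x s).1) z) := by
  apply Finset.measurable_sum
  intro z _
  have hobs := measurable_obsW (S := S) (Z := Z) b z
  have hupd : Measurable (fun x : S → (((S × Z) → ℝ) × ((S × Z) → ℝ)) =>
      bUpd b (fun s => (x s).1) z) := by
    apply measurable_pi_lambda
    intro s'
    apply Measurable.div _ hobs
    apply Finset.measurable_sum
    intro s _
    have hx2 : Measurable (fun x : S → (((S × Z) → ℝ) × ((S × Z) → ℝ)) => (x s).1 (s', z)) :=
      (measurable_fst.comp (measurable_pi_apply s)).eval
    exact hx2.mul_const (b s)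
  unfold bTerm
  exact Measurable.ite (hobs (measurableSet_singleton 0)) measurable_const
    (hobs.mul (hV.comp hupd))

lemma measurableSet_XasSet (pbar : (S × Z) → ℝ) :
    MeasurableSet (XasSet (S := S) (Z := Z) pbar) := by
  have h1 : ∀ i, MeasurableSet {x : ((S × Z) → ℝ) × ((S × Z) → ℝ) | x.1 i - pbar i ≤ x.2 i} :=
    fun i => measurableSet_le (((measurable_pi_apply i).comp measurable_fst).sub_const _)
      ((measurable_pi_apply i).comp measurable_snd)
  have h2 : ∀ i, MeasurableSet {x : ((S × Z) → ℝ) × ((S × Z) → ℝ) | pbar i - x.1 i ≤ x.2 i} :=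
    fun i => measurableSet_le (((measurable_pi_apply i).comp measurable_fst).const_sub _)
      ((measurable_pi_apply i).comp measurable_snd)
  have h3 : MeasurableSet {x : ((S × Z) → ℝ) × ((S × Z) → ℝ) | x.1 ∈ stdSimplex ℝ (S × Z)} :=
    measurable_fst (isClosed_stdSimplex ℝ _).measurableSet
  have heq : XasSet (S := S) (Z := Z) pbar =
      (⋂ i, {x : ((S × Z) → ℝ) × ((S × Z) → ℝ) | x.1 i - pbar i ≤ x.2 i}) ∩
      ((⋂ i, {x : ((S × Z) → ℝ) × ((S × Z) → ℝ) | pbar i - x.1 i ≤ x.2 i}) ∩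
        {x : ((S × Z) → ℝ) × ((S × Z) → ℝ) | x.1 ∈ stdSimplex ℝ (S × Z)}) := by
    ext x
    simp [XasSet, Set.mem_iInter]
  rw [heq]
  exact (MeasurableSet.iInter h1).inter ((MeasurableSet.iInter h2).inter h3)

lemma DaSet_props {pbar c : S → (S × Z) → ℝ}
    {μ : MeasureTheory.Measure (S → ((S × Z) → ℝ) × ((S × Z) → ℝ))}
    (hμ : μ ∈ DaSet pbar c) :
    IsProbabilityMeasure μ ∧ ∀ᵐ x ∂μ, ∀ s, (x s).1 ∈ stdSimplex ℝ (S × Z) := by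
  obtain ⟨ν, hν, rfl⟩ := hμ
  haveI : ∀ s, IsProbabilityMeasure (ν s) := fun s => (hν s).1
  refine ⟨inferInstance, ?_⟩
  set G := Set.pi Set.univ (fun s => XasSet (S := S) (Z := Z) (pbar s)) with hGdef
  have hGm : MeasurableSet G := MeasurableSet.univ_pi fun s => measurableSet_XasSet _
  have hG1 : Measure.pi ν G = 1 := by
    rw [hGdef, Measure.pi_pi]
    exact Finset.prod_eq_one fun s _ => (hν s).2.1
  have hcompl : Measure.pi ν Gᶜ = 0 := by
    have h := measure_compl hGm (measure_ne_top (Measure.pi ν) G)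
    rw [hG1, measure_univ] at h
    simpa using h
  have hae : ∀ᵐ x ∂(Measure.pi ν), x ∈ G := by
    rw [MeasureTheory.ae_iff]
    exact hcompl
  filter_upwards [hae] with x hx s
  exact (hx s (Set.mem_univ s)).2.2

end Aux
section Aux2

open Set

lemma int_abs_le {α : Type*} [MeasurableSpace α] {μ : MeasureTheory.Measure α}
    [IsProbabilityMeasure μ] {f : α → ℝ} (hf : AEStronglyMeasurable f μ) {C : ℝ}
    (hC : ∀ᵐ x ∂μ, |f x| ≤ C) : Integrable f μ ∧ |∫ x, f x ∂μ| ≤ C := by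
  have hint : Integrable f μ :=
    (integrable_const C).mono' hf (by simpa [Real.norm_eq_abs] using hC)
  refine ⟨hint, ?_⟩
  have h := norm_integral_le_of_norm_le_const (μ := μ) (f := f)
    (by simpa [Real.norm_eq_abs] using hC)
  simpa [Real.norm_eq_abs] using h

variable {S Z : Type*} [Fintype S] [Fintype Z]

lemma UVal_abs_le {A : Type*} (r : A → S → ℝ) {β : ℝ} (hβ : 0 ≤ β)
    {b : S → ℝ} (hb : b ∈ stdSimplex ℝ S) (a : A)
    {V : (S → ℝ) → ℝ} (hV : Measurable V)
    {M : ℝ} (hM : ∀ b' ∈ stdSimplex ℝ S, |V b'| ≤ M)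
    {pbar c : S → (S × Z) → ℝ}
    {μ : MeasureTheory.Measure (S → ((S × Z) → ℝ) × ((S × Z) → ℝ))}
    (hμ : μ ∈ DaSet pbar c) :
    Integrable (fun x => (∑ s, b s * r a s) + β * ∑ z, bTerm V b (fun s => (x s).1) z) μ ∧
    |UVal r β V b a μ| ≤ |∑ s, b s * r a s| + β * M := by
  obtain ⟨hprob, hae⟩ := DaSet_props hμ
  haveI := hprob
  have hmeas : Measurable (fun x : S → ((S × Z) → ℝ) × ((S × Z) → ℝ) =>
      (∑ s, b s * r a s) + β * ∑ z, bTerm V b (fun s => (x s).1) z) :=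
    measurable_const.add ((measurable_sum_bTerm hV b).const_mul β)
  have hbd : ∀ᵐ x ∂μ, |(∑ s, b s * r a s) + β * ∑ z, bTerm V b (fun s => (x s).1) z| ≤
      |∑ s, b s * r a s| + β * M := by
    filter_upwards [hae] with x hx
    have h1 : |∑ z, bTerm V b (fun s => (x s).1) z| ≤ M := by
      have h2 := sum_bTerm_diff_le (V1 := V) (V2 := fun _ => (0 : ℝ)) hb hx (K := M)
        (fun b' hb' => by simpa using hM b' hb')
      simpa [bTerm, mul_zero] using h2
    calc |(∑ s, b s * r a s) + β * ∑ z, bTerm V b (fun s => (x s).1) z|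
        ≤ |∑ s, b s * r a s| + |β * ∑ z, bTerm V b (fun s => (x s).1) z| := abs_add_le _ _
      _ ≤ |∑ s, b s * r a s| + β * M := by
          rw [abs_mul, abs_of_nonneg hβ]
          exact add_le_add (le_refl _) (mul_le_mul_of_nonneg_left h1 hβ)
  exact int_abs_le hmeas.aestronglyMeasurable hbd

lemma UVal_diff_le {A : Type*} (r : A → S → ℝ) {β : ℝ} (hβ : 0 ≤ β)
    {b : S → ℝ} (hb : b ∈ stdSimplex ℝ S) (a : A)
    {V1 V2 : (S → ℝ) → ℝ} (h1 : Measurable V1) (h2 : Measurable V2)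
    {M1 M2 : ℝ} (hM1 : ∀ b' ∈ stdSimplex ℝ S, |V1 b'| ≤ M1)
    (hM2 : ∀ b' ∈ stdSimplex ℝ S, |V2 b'| ≤ M2)
    {K : ℝ} (hK : ∀ b' ∈ stdSimplex ℝ S, |V1 b' - V2 b'| ≤ K)
    {pbar c : S → (S × Z) → ℝ}
    {μ : MeasureTheory.Measure (S → ((S × Z) → ℝ) × ((S × Z) → ℝ))}
    (hμ : μ ∈ DaSet pbar c) :
    |UVal r β V1 b a μ - UVal r β V2 b a μ| ≤ β * K := by
  obtain ⟨hprob, hae⟩ := DaSet_props hμ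
  haveI := hprob
  have hI1 := (UVal_abs_le r hβ hb a h1 hM1 hμ).1
  have hI2 := (UVal_abs_le r hβ hb a h2 hM2 hμ).1
  unfold UVal
  rw [← integral_sub hI1 hI2]
  have hbd : ∀ᵐ x ∂μ, |((∑ s, b s * r a s) + β * ∑ z, bTerm V1 b (fun s => (x s).1) z) -
      ((∑ s, b s * r a s) + β * ∑ z, bTerm V2 b (fun s => (x s).1) z)| ≤ β * K := by
    filter_upwards [hae] with x hx
    have h3 := sum_bTerm_diff_le hb hx hK
    have heq : ((∑ s, b s * r a s) + β * ∑ z, bTerm V1 b (fun s => (x s).1) z) -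
        ((∑ s, b s * r a s) + β * ∑ z, bTerm V2 b (fun s => (x s).1) z) =
        β * ((∑ z, bTerm V1 b (fun s => (x s).1) z) - ∑ z, bTerm V2 b (fun s => (x s).1) z) := by
      ring
    rw [heq, abs_mul, abs_of_nonneg hβ]
    exact mul_le_mul_of_nonneg_left h3 hβ
  exact (int_abs_le (hI1.sub hI2).aestronglyMeasurable hbd).2

lemma DaSet_nonempty {pbar c : S → (S × Z) → ℝ}
    (hpbar : ∀ s, pbar s ∈ stdSimplex ℝ (S × Z)) (hc : ∀ s i, 0 ≤ c s i) :
    (DaSet pbar c).Nonempty := by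
  refine ⟨Measure.pi fun s => Measure.dirac (pbar s, c s),
    fun s => Measure.dirac (pbar s, c s), fun s => ?_, rfl⟩
  have hmem : ((pbar s, c s) : ((S × Z) → ℝ) × ((S × Z) → ℝ)) ∈ XasSet (pbar s) := by
    refine ⟨fun i => ?_, fun i => ?_, hpbar s⟩
    · simpa using hc s i
    · simpa using hc s i
  refine ⟨inferInstance, Measure.dirac_apply_of_mem hmem, ?_, ?_⟩
  · exact (integrable_const (c s)).congr (ae_eq_dirac
      (fun x : ((S × Z) → ℝ) × ((S × Z) → ℝ) => x.2)).symm
  · rw [integral_dirac]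

lemma stdSimplex_nonempty' {ι : Type*} [Fintype ι] [Nonempty ι] :
    (stdSimplex ℝ ι).Nonempty := by
  obtain ⟨i0⟩ := (inferInstance : Nonempty ι)
  classical
  refine ⟨fun i => if i = i0 then 1 else 0, fun i => ?_, by simp⟩
  dsimp only
  split <;> norm_num

lemma csInf_diff_le {α : Type*} {D : Set α} (hD : D.Nonempty) {f g : α → ℝ} {ε : ℝ}
    (hfb : BddBelow (f '' D)) (hgb : BddBelow (g '' D))
    (h : ∀ x ∈ D, |f x - g x| ≤ ε) : |sInf (f '' D) - sInf (g '' D)| ≤ ε := by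
  have key : ∀ (u v : α → ℝ), BddBelow (u '' D) →
      (∀ x ∈ D, u x - v x ≤ ε) → sInf (u '' D) - ε ≤ sInf (v '' D) := by
    intro u v hub huv
    apply le_csInf (hD.image v)
    rintro y ⟨x, hx, rfl⟩
    have h2 : sInf (u '' D) ≤ u x := csInf_le hub ⟨x, hx, rfl⟩
    have h3 := huv x hx
    linarith
  have k1 := key f g hfb fun x hx => (abs_sub_le_iff.1 (h x hx)).1
  have k2 := key g f hgb fun x hx => (abs_sub_le_iff.1 (h x hx)).2
  rw [abs_sub_le_iff]
  exact ⟨by linarith, by linarith⟩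

lemma ciSup_diff_le {A : Type*} [Fintype A] [Nonempty A] {F1 F2 : A → ℝ} {ε : ℝ}
    (h : ∀ a, |F1 a - F2 a| ≤ ε) : |(⨆ a, F1 a) - (⨆ a, F2 a)| ≤ ε := by
  have b1 : BddAbove (Set.range F1) := (Set.finite_range F1).bddAbove
  have b2 : BddAbove (Set.range F2) := (Set.finite_range F2).bddAbove
  have key : ∀ (u v : A → ℝ), BddAbove (Set.range v) →
      (∀ a, u a - v a ≤ ε) → (⨆ a, u a) ≤ (⨆ a, v a) + ε := by
    intro u v hvb huv
    apply ciSup_le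
    intro a
    have h2 : v a ≤ ⨆ a, v a := le_ciSup hvb a
    have h3 := huv a
    linarith
  have k1 := key F1 F2 b2 fun a => (abs_sub_le_iff.1 (h a)).1
  have k2 := key F2 F1 b1 fun a => (abs_sub_le_iff.1 (h a)).2
  rw [abs_sub_le_iff]
  exact ⟨by linarith, by linarith⟩

end Aux2

/-- For bounded Borel `V1, V2 : Δ(S) → ℝ` and every belief state `b ∈ Δ(S)`,
`|(LV1)(b) − (LV2)(b)| ≤ β · sup_{b' ∈ Δ(S)} |V1(b') − V2(b')|`; consequently, for `0 < β < 1`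
the distributionally robust Bellman operator is a contraction with modulus `β` in the
supremum distance. -/
theorem bellman_contraction {S Z A : Type*} [Fintype S] [Nonempty S]
    [Fintype Z] [Nonempty Z] [Fintype A] [Nonempty A]
    (pbar c : A → S → (S × Z) → ℝ)
    (hpbar : ∀ a s, pbar a s ∈ stdSimplex ℝ (S × Z))
    (hc : ∀ a s i, 0 ≤ c a s i)
    (r : A → S → ℝ) (β : ℝ) (hβ0 : 0 < β) (hβ1 : β < 1)
    (V1 V2 : (S → ℝ) → ℝ) (hV1m : Measurable V1) (hV2m : Measurable V2)
    (hV1b : ∃ M, ∀ b ∈ stdSimplex ℝ S, |V1 b| ≤ M)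
    (hV2b : ∃ M, ∀ b ∈ stdSimplex ℝ S, |V2 b| ≤ M) :
    (∀ b ∈ stdSimplex ℝ S,
      |Lop pbar c r β V1 b - Lop pbar c r β V2 b| ≤
        β * sSup ((fun b' => |V1 b' - V2 b'|) '' stdSimplex ℝ S)) ∧
    sSup ((fun b => |Lop pbar c r β V1 b - Lop pbar c r β V2 b|) '' stdSimplex ℝ S) ≤
      β * sSup ((fun b' => |V1 b' - V2 b'|) '' stdSimplex ℝ S) := by
  classical
  obtain ⟨M1, hM1⟩ := hV1b
  obtain ⟨M2, hM2⟩ := hV2b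
  have hsne : (stdSimplex ℝ S).Nonempty := stdSimplex_nonempty'
  have hbdd : BddAbove ((fun b' => |V1 b' - V2 b'|) '' stdSimplex ℝ S) := by
    refine ⟨M1 + M2, ?_⟩
    rintro y ⟨b', hb', rfl⟩
    have h := abs_add_le (V1 b') (-(V2 b'))
    rw [abs_neg] at h
    simp only [sub_eq_add_neg]
    exact h.trans (add_le_add (hM1 b' hb') (hM2 b' hb'))
  set K := sSup ((fun b' => |V1 b' - V2 b'|) '' stdSimplex ℝ S) with hKdef
  have hK : ∀ b' ∈ stdSimplex ℝ S, |V1 b' - V2 b'| ≤ K :=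
    fun b' hb' => le_csSup hbdd ⟨b', hb', rfl⟩
  obtain ⟨b0, hb0⟩ := hsne
  have hK0 : 0 ≤ K := (abs_nonneg _).trans (hK b0 hb0)
  have hmain : ∀ b ∈ stdSimplex ℝ S,
      |Lop pbar c r β V1 b - Lop pbar c r β V2 b| ≤ β * K := by
    intro b hb
    unfold Lop
    apply ciSup_diff_le
    intro a
    have hne : (DaSet (pbar a) (c a)).Nonempty := DaSet_nonempty (hpbar a) (hc a)
    apply csInf_diff_le hne
    · refine ⟨-(|∑ s, b s * r a s| + β * M1), ?_⟩
      rintro y ⟨μ, hμ, rfl⟩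
      have h := (UVal_abs_le r hβ0.le hb a hV1m hM1 hμ).2
      have h2 := neg_abs_le (UVal r β V1 b a μ)
      linarith
    · refine ⟨-(|∑ s, b s * r a s| + β * M2), ?_⟩
      rintro y ⟨μ, hμ, rfl⟩
      have h := (UVal_abs_le r hβ0.le hb a hV2m hM2 hμ).2
      have h2 := neg_abs_le (UVal r β V2 b a μ)
      linarith
    · intro μ hμ
      exact UVal_diff_le r hβ0.le hb a hV1m hV2m hM1 hM2 hK hμ
  refine ⟨hmain, ?_⟩
  apply Real.sSup_le
  · rintro y ⟨b, hb, rfl⟩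
    exact hmain b hb
  · exact mul_nonneg hβ0.le hK0
end

section
/- Let V : Δ(S) → ℝ be convex and continuous and let a ∈ A. Then the function Q(b) = inf_{μ̃∈D̃_a} U_V(b,a,μ̃) is convex in the belief state b on Δ(S). -/
open MeasureTheory

section Aux

set_option linter.unusedSectionVars false

variable {S Z : Type*} [Fintype S] [Fintype Z]

/-- the perspective-type function -/
noncomputable def htil (V : (S → ℝ) → ℝ) (m : S → ℝ) : ℝ :=
  if (∑ s, m s) = 0 then 0 else (∑ s, m s) * V (fun s => m s / ∑ s', m s')

def mvec (b : S → ℝ) (q : S → (S × Z) → ℝ) (z : Z) : S → ℝ :=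
  fun s' => ∑ s, q s (s', z) * b s

lemma obsW_eq_sum (b : S → ℝ) (q : S → (S × Z) → ℝ) (z : Z) :
    obsW b q z = ∑ s', mvec b q z s' := Finset.sum_comm

lemma bTerm_eq_htil (V : (S → ℝ) → ℝ) (b : S → ℝ) (q : S → (S × Z) → ℝ) (z : Z) :
    bTerm V b q z = htil V (mvec b q z) := by
  simp only [bTerm, htil]
  rw [← obsW_eq_sum b q z]
  rfl

lemma mem_simplex_div {m : S → ℝ} (hm : ∀ s, 0 ≤ m s) (ht : (∑ s, m s) ≠ 0) :
    (fun s => m s / ∑ s', m s') ∈ stdSimplex ℝ S := by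
  have htpos : 0 < ∑ s, m s :=
    lt_of_le_of_ne (Finset.sum_nonneg fun s _ => hm s) (Ne.symm ht)
  refine ⟨fun s => div_nonneg (hm s) htpos.le, ?_⟩
  rw [← Finset.sum_div, div_self ht]

lemma abs_htil_le {V : (S → ℝ) → ℝ} {M : ℝ}
    (hM : ∀ x ∈ stdSimplex ℝ S, |V x| ≤ M) {m : S → ℝ} (hm : ∀ s, 0 ≤ m s) :
    |htil V m| ≤ M * ∑ s, m s := by
  by_cases ht : (∑ s, m s) = 0
  · simp [htil, ht]
  · have htpos : 0 < ∑ s, m s :=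
      lt_of_le_of_ne (Finset.sum_nonneg fun s _ => hm s) (Ne.symm ht)
    rw [htil, if_neg ht, abs_mul, abs_of_pos htpos, mul_comm]
    exact mul_le_mul_of_nonneg_right (hM _ (mem_simplex_div hm ht)) htpos.le

lemma htil_smul {V : (S → ℝ) → ℝ} {mu : ℝ} (hmu : 0 < mu) (m : S → ℝ) :
    htil V (fun s => mu * m s) = mu * htil V m := by
  have hsum : (∑ s, mu * m s) = mu * ∑ s, m s := by rw [Finset.mul_sum]
  by_cases ht : (∑ s, m s) = 0
  · rw [htil, htil, if_pos (by rw [hsum, ht, mul_zero]), if_pos ht, mul_zero]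
  · have hmt : mu * ∑ s, m s ≠ 0 := mul_ne_zero hmu.ne' ht
    rw [htil, htil, if_neg (by rw [hsum]; exact hmt), if_neg ht, hsum]
    have h2 : (fun s => mu * m s / (mu * ∑ s', m s')) = fun s => m s / ∑ s', m s' := by
      funext s
      rw [mul_div_mul_left _ _ hmu.ne']
    rw [h2]; ring

lemma htil_comb {V : (S → ℝ) → ℝ} (hVcv : ConvexOn ℝ (stdSimplex ℝ S) V)
    {m1 m2 : S → ℝ} (h1 : ∀ s, 0 ≤ m1 s) (h2 : ∀ s, 0 ≤ m2 s)
    {lam mu : ℝ} (hl : 0 ≤ lam) (hmu : 0 ≤ mu) (hs : lam + mu = 1) :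
    htil V (fun s => lam * m1 s + mu * m2 s) ≤ lam * htil V m1 + mu * htil V m2 := by
  set t1 := ∑ s, m1 s with ht1def
  set t2 := ∑ s, m2 s with ht2def
  have ht1 : 0 ≤ t1 := Finset.sum_nonneg fun s _ => h1 s
  have ht2 : 0 ≤ t2 := Finset.sum_nonneg fun s _ => h2 s
  have htsum : (∑ s, (lam * m1 s + mu * m2 s)) = lam * t1 + mu * t2 := by
    rw [Finset.sum_add_distrib, ← Finset.mul_sum, ← Finset.mul_sum]
  have hzhtil : ∀ (c : ℝ) (m : S → ℝ), c * (∑ s, m s) = 0 → c * htil V m = 0 := by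
    intro c m hcm
    rcases mul_eq_zero.mp hcm with h | h
    · rw [h, zero_mul]
    · rw [htil, if_pos h, mul_zero]
  by_cases ht : lam * t1 + mu * t2 = 0
  · have hz1 : lam * t1 = 0 :=
      le_antisymm (by nlinarith [mul_nonneg hmu ht2]) (mul_nonneg hl ht1)
    have hz2 : mu * t2 = 0 := by linarith
    rw [htil, if_pos (htsum.trans ht), hzhtil _ _ hz1, hzhtil _ _ hz2]; norm_num
  · by_cases hz1 : lam * t1 = 0
    · -- the m1 contribution vanishes termwise
      have hterm : ∀ s, lam * m1 s = 0 := by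
        rcases mul_eq_zero.mp hz1 with h | h
        · intro s; rw [h, zero_mul]
        · intro s
          have := (Finset.sum_eq_zero_iff_of_nonneg (fun s _ => h1 s)).mp h s (Finset.mem_univ s)
          rw [this, mul_zero]
      have hfn : (fun s => lam * m1 s + mu * m2 s) = fun s => mu * m2 s := by
        funext s; rw [hterm s, zero_add]
      have hmupos : 0 < mu := by
        rcases hmu.lt_or_eq with h | h
        · exact h
        · exfalso; apply ht; rw [hz1, ← h, zero_mul, add_zero]
      rw [hfn, htil_smul hmupos, hzhtil _ _ hz1, zero_add]
    · by_cases hz2 : mu * t2 = 0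
      · have hterm : ∀ s, mu * m2 s = 0 := by
          rcases mul_eq_zero.mp hz2 with h | h
          · intro s; rw [h, zero_mul]
          · intro s
            have := (Finset.sum_eq_zero_iff_of_nonneg (fun s _ => h2 s)).mp h s (Finset.mem_univ s)
            rw [this, mul_zero]
        have hfn : (fun s => lam * m1 s + mu * m2 s) = fun s => lam * m1 s := by
          funext s; rw [hterm s, add_zero]
        have hlampos : 0 < lam := by
          rcases hl.lt_or_eq with h | h
          · exact h
          · exfalso; apply ht; rw [hz2, ← h, zero_mul, zero_add]
        rw [hfn, htil_smul hlampos, hzhtil _ _ hz2, add_zero]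
      · -- main case
        have ht1pos : 0 < t1 := by
          rcases ht1.lt_or_eq with h | h
          · exact h
          · exact absurd (by rw [← h, mul_zero]) hz1
        have ht2pos : 0 < t2 := by
          rcases ht2.lt_or_eq with h | h
          · exact h
          · exact absurd (by rw [← h, mul_zero]) hz2
        have hlampos : 0 < lam := by
          rcases hl.lt_or_eq with h | h
          · exact h
          · exact absurd (by rw [← h, zero_mul]) hz1
        have hmupos : 0 < mu := by
          rcases hmu.lt_or_eq with h | h
          · exact h
          · exact absurd (by rw [← h, zero_mul]) hz2
        have htpos : 0 < lam * t1 + mu * t2 := by positivity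
        set t := lam * t1 + mu * t2 with htdef
        have hx1 : (fun s => m1 s / ∑ s', m1 s') ∈ stdSimplex ℝ S :=
          mem_simplex_div h1 ht1pos.ne'
        have hx2 : (fun s => m2 s / ∑ s', m2 s') ∈ stdSimplex ℝ S :=
          mem_simplex_div h2 ht2pos.ne'
        have hkey := hVcv.2 hx1 hx2 (show (0:ℝ) ≤ lam * t1 / t by positivity)
          (show (0:ℝ) ≤ mu * t2 / t by positivity)
          (show lam * t1 / t + mu * t2 / t = 1 by
            rw [← add_div, div_self htpos.ne'])
        have harg : (lam * t1 / t) • (fun s => m1 s / ∑ s', m1 s') +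
            (mu * t2 / t) • (fun s => m2 s / ∑ s', m2 s') =
            fun s => (lam * m1 s + mu * m2 s) / t := by
          funext s
          simp only [Pi.add_apply, Pi.smul_apply, smul_eq_mul]
          rw [show (∑ s', m1 s') = t1 from rfl, show (∑ s', m2 s') = t2 from rfl]
          field_simp
        rw [harg] at hkey
        have hof : ∀ (m : S → ℝ), (∑ s, m s) ≠ 0 →
            htil V m = (∑ s, m s) * V (fun s => m s / ∑ s', m s') := fun m h => if_neg h
        rw [hof _ (htsum.trans_ne ht), hof _ ht1pos.ne', hof _ ht2pos.ne']
        beta_reduce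
        rw [htsum]
        calc t * V (fun s => (lam * m1 s + mu * m2 s) / t)
            ≤ t * (lam * t1 / t * V (fun s => m1 s / ∑ s', m1 s') +
              mu * t2 / t * V (fun s => m2 s / ∑ s', m2 s')) :=
              mul_le_mul_of_nonneg_left hkey htpos.le
          _ = lam * ((∑ s, m1 s) * V (fun s => m1 s / ∑ s', m1 s')) +
              mu * ((∑ s, m2 s) * V (fun s => m2 s / ∑ s', m2 s')) := by
              rw [← ht1def, ← ht2def]; field_simp

end Aux

section Meas

set_option linter.unusedSectionVars false

variable {S Z : Type*} [Fintype S] [Fintype Z]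

lemma isClosed_XasSet (pb : (S × Z) → ℝ) : IsClosed (XasSet (S := S) (Z := Z) pb) := by
  have : XasSet (S := S) (Z := Z) pb =
      (⋂ i, {x : ((S × Z) → ℝ) × ((S × Z) → ℝ) | x.1 i - pb i ≤ x.2 i}) ∩
      ((⋂ i, {x : ((S × Z) → ℝ) × ((S × Z) → ℝ) | pb i - x.1 i ≤ x.2 i}) ∩
       (Prod.fst ⁻¹' stdSimplex ℝ (S × Z))) := by
    ext x; simp [XasSet, Set.mem_iInter]
  rw [this]
  have h2i : ∀ i, Continuous fun x : ((S × Z) → ℝ) × ((S × Z) → ℝ) => x.2 i :=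
    fun i => (continuous_apply i).comp continuous_snd
  have h1i : ∀ i, Continuous fun x : ((S × Z) → ℝ) × ((S × Z) → ℝ) => x.1 i :=
    fun i => (continuous_apply i).comp continuous_fst
  refine IsClosed.inter (isClosed_iInter fun i => isClosed_le ((h1i i).sub continuous_const) (h2i i))
    (IsClosed.inter (isClosed_iInter fun i => isClosed_le (continuous_const.sub (h1i i)) (h2i i))
    ((isClosed_stdSimplex ℝ (S × Z)).preimage continuous_fst))

lemma norm_le_one_of_mem_simplex {ι : Type*} [Fintype ι] {x : ι → ℝ}
    (hx : x ∈ stdSimplex ℝ ι) : ‖x‖ ≤ 1 := by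
  rw [pi_norm_le_iff_of_nonneg zero_le_one]
  intro i
  rw [Real.norm_eq_abs, abs_of_nonneg (hx.1 i)]
  calc x i ≤ ∑ j, x j := Finset.single_le_sum (fun j _ => hx.1 j) (Finset.mem_univ i)
    _ = 1 := hx.2

lemma measurable_bTerm (V : (S → ℝ) → ℝ) (hVct : Continuous V) (b : S → ℝ) (z : Z) :
    Measurable fun q : S → (S × Z) → ℝ => bTerm V b q z := by
  have happ : ∀ (s : S) (i : S × Z), Measurable fun q : S → (S × Z) → ℝ => q s i :=
    fun s i => (measurable_pi_apply i).comp (measurable_pi_apply s)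
  have hobs : Measurable fun q : S → (S × Z) → ℝ => obsW b q z := by
    unfold obsW
    exact Finset.measurable_sum _ fun s _ => Finset.measurable_sum _ fun s' _ =>
      (happ s (s', z)).mul_const (b s)
  have hnum : ∀ s', Measurable fun q : S → (S × Z) → ℝ => ∑ s, q s (s', z) * b s :=
    fun s' => Finset.measurable_sum _ fun s _ => (happ s (s', z)).mul_const (b s)
  have hupd : Measurable fun q : S → (S × Z) → ℝ => bUpd b q z :=
    measurable_pi_lambda _ fun s' => (hnum s').div hobs
  unfold bTerm
  exact Measurable.ite (hobs (measurableSet_singleton 0)) measurable_const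
    (hobs.mul (hVct.measurable.comp hupd))

lemma measurable_F :
    Measurable (fun x : S → ((S × Z) → ℝ) × ((S × Z) → ℝ) => (fun s => (x s).1)) :=
  measurable_pi_lambda _ fun s => measurable_fst.comp (measurable_pi_apply s)

lemma mvec_nonneg {b : S → ℝ} (hb : b ∈ stdSimplex ℝ S) {q : S → (S × Z) → ℝ}
    (hq : ∀ s, q s ∈ stdSimplex ℝ (S × Z)) (z : Z) (s' : S) : 0 ≤ mvec b q z s' :=
  Finset.sum_nonneg fun s _ => mul_nonneg ((hq s).1 _) (hb.1 s)

lemma sum_mvec_le_one {b : S → ℝ} (hb : b ∈ stdSimplex ℝ S) {q : S → (S × Z) → ℝ}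
    (hq : ∀ s, q s ∈ stdSimplex ℝ (S × Z)) (z : Z) : ∑ s', mvec b q z s' ≤ 1 := by
  have hinner : ∀ s, ∑ s', q s (s', z) ≤ 1 := by
    intro s
    calc ∑ s', q s (s', z) ≤ ∑ s', ∑ z', q s (s', z') :=
          Finset.sum_le_sum fun s' _ => Finset.single_le_sum (fun z' _ => (hq s).1 _)
            (Finset.mem_univ z)
      _ = ∑ i : S × Z, q s i := by rw [Fintype.sum_prod_type]
      _ = 1 := (hq s).2
  calc ∑ s', mvec b q z s' = ∑ s, (∑ s', q s (s', z)) * b s := by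
        rw [show (∑ s', mvec b q z s') = ∑ s, ∑ s', q s (s', z) * b s from Finset.sum_comm]
        exact Finset.sum_congr rfl fun s _ => (Finset.sum_mul ..).symm
    _ ≤ ∑ s, 1 * b s := Finset.sum_le_sum fun s _ =>
        mul_le_mul_of_nonneg_right (hinner s) (hb.1 s)
    _ = 1 := by simp [hb.2]

lemma abs_bTerm_le {V : (S → ℝ) → ℝ} {M : ℝ} (hM0 : 0 ≤ M)
    (hM : ∀ x ∈ stdSimplex ℝ S, |V x| ≤ M) {b : S → ℝ} (hb : b ∈ stdSimplex ℝ S)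
    {q : S → (S × Z) → ℝ} (hq : ∀ s, q s ∈ stdSimplex ℝ (S × Z)) (z : Z) :
    |bTerm V b q z| ≤ M := by
  rw [bTerm_eq_htil]
  calc |htil V (mvec b q z)| ≤ M * ∑ s', mvec b q z s' :=
        abs_htil_le hM (mvec_nonneg hb hq z)
    _ ≤ M * 1 := mul_le_mul_of_nonneg_left (sum_mvec_le_one hb hq z) hM0
    _ = M := mul_one M

lemma abs_sum_bTerm_le {V : (S → ℝ) → ℝ} {M : ℝ} (hM0 : 0 ≤ M)
    (hM : ∀ x ∈ stdSimplex ℝ S, |V x| ≤ M) {b : S → ℝ} (hb : b ∈ stdSimplex ℝ S)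
    {q : S → (S × Z) → ℝ} (hq : ∀ s, q s ∈ stdSimplex ℝ (S × Z)) :
    |∑ z, bTerm V b q z| ≤ (Fintype.card Z : ℝ) * M := by
  calc |∑ z, bTerm V b q z| ≤ ∑ z, |bTerm V b q z| := Finset.abs_sum_le_sum_abs _ _
    _ ≤ ∑ _z : Z, M := Finset.sum_le_sum fun z _ => abs_bTerm_le hM0 hM hb hq z
    _ = (Fintype.card Z : ℝ) * M := by rw [Finset.sum_const, Finset.card_univ, nsmul_eq_mul]

lemma das_ae {pb cc : (S × Z) → ℝ} {ν : Measure (((S × Z) → ℝ) × ((S × Z) → ℝ))}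
    (hν : ν ∈ DasSet pb cc) : ∀ᵐ y ∂ν, y ∈ XasSet pb := by
  obtain ⟨hprob, hX, -, -⟩ := hν
  haveI := hprob
  rw [ae_iff]
  have hXc := (isClosed_XasSet pb).measurableSet
  have h0 : ν (XasSet pb)ᶜ = 0 := by
    rw [measure_compl hXc (measure_ne_top _ _), measure_univ, hX, tsub_self]
  exact h0

lemma das_int1 {pb cc : (S × Z) → ℝ} {ν : Measure (((S × Z) → ℝ) × ((S × Z) → ℝ))}
    (hν : ν ∈ DasSet pb cc) : Integrable (fun y => y.1) ν := by
  haveI := hν.1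
  refine Integrable.mono' (integrable_const 1) measurable_fst.aestronglyMeasurable ?_
  filter_upwards [das_ae hν] with y hy
  exact norm_le_one_of_mem_simplex hy.2.2

lemma das_mean_mem {pb cc : (S × Z) → ℝ} {ν : Measure (((S × Z) → ℝ) × ((S × Z) → ℝ))}
    (hν : ν ∈ DasSet pb cc) : (∫ y, y.1 ∂ν) ∈ BasSet pb cc := by
  haveI := hν.1
  have h1 := das_int1 hν
  have hae := das_ae hν
  have hcoord : ∀ i, (∫ y, y.1 ∂ν) i = ∫ y, y.1 i ∂ν := by
    intro i
    have h := ContinuousLinearMap.integral_comp_comm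
      (ContinuousLinearMap.proj (R := ℝ) (φ := fun _ : S × Z => ℝ) i) h1
    simpa [ContinuousLinearMap.proj_apply] using h.symm
  have hcoordint : ∀ i, Integrable (fun y : ((S × Z) → ℝ) × ((S × Z) → ℝ) => y.1 i) ν :=
    fun i => (ContinuousLinearMap.proj (R := ℝ) (φ := fun _ : S × Z => ℝ) i).integrable_comp h1
  refine ⟨⟨fun i => ?_, ?_⟩, fun i => ?_⟩
  · rw [hcoord]
    apply integral_nonneg_of_ae
    filter_upwards [hae] with y hy
    exact hy.2.2.1 i
  · calc ∑ i, (∫ y, y.1 ∂ν) i = ∑ i, ∫ y, y.1 i ∂ν :=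
          Finset.sum_congr rfl fun i _ => hcoord i
      _ = ∫ y, ∑ i, y.1 i ∂ν := (integral_finset_sum _ fun i _ => hcoordint i).symm
      _ = ∫ _y, (1 : ℝ) ∂ν := integral_congr_ae (by
          filter_upwards [hae] with y hy
          exact hy.2.2.2)
      _ = 1 := by simp
  · have hu := hν.2.2.1
    have hui : Integrable (fun y : ((S × Z) → ℝ) × ((S × Z) → ℝ) => y.2 i) ν :=
      (ContinuousLinearMap.proj (R := ℝ) (φ := fun _ : S × Z => ℝ) i).integrable_comp hu
    have hmean : ∫ y, y.2 i ∂ν = cc i := by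
      have hcc := ContinuousLinearMap.integral_comp_comm
        (ContinuousLinearMap.proj (R := ℝ) (φ := fun _ : S × Z => ℝ) i) hu
      rw [show (∫ y, y.2 ∂ν) = cc from hν.2.2.2] at hcc
      simpa [ContinuousLinearMap.proj_apply] using hcc
    calc |(∫ y, y.1 ∂ν) i - pb i| = |∫ y, (y.1 i - pb i) ∂ν| := by
          rw [hcoord, integral_sub (hcoordint i) (integrable_const _), integral_const]
          simp
      _ ≤ ∫ y, |y.1 i - pb i| ∂ν := by
          simpa [Real.norm_eq_abs] using
            norm_integral_le_integral_norm (μ := ν)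
              (fun y : ((S × Z) → ℝ) × ((S × Z) → ℝ) => y.1 i - pb i)
      _ ≤ ∫ y, y.2 i ∂ν := integral_mono_ae ((hcoordint i).sub (integrable_const _)).abs hui (by
          filter_upwards [hae] with y hy
          exact abs_sub_le_iff.mpr ⟨hy.1 i, hy.2.1 i⟩)
      _ = cc i := hmean

end Meas

section HtilCont

variable {S : Type*} [Fintype S]

lemma continuousOn_htil {V : (S → ℝ) → ℝ} (hVct : Continuous V) :
    ContinuousOn (htil V) {m : S → ℝ | ∀ s, 0 ≤ m s} := by
  obtain ⟨M, hM⟩ := (isCompact_stdSimplex ℝ S).exists_bound_of_continuousOn hVct.continuousOn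
  have hM' : ∀ x ∈ stdSimplex ℝ S, |V x| ≤ max M 0 := fun x hx =>
    le_trans (by simpa [Real.norm_eq_abs] using hM x hx) (le_max_left _ _)
  have hsum : Continuous fun m : S → ℝ => ∑ s, m s :=
    continuous_finset_sum _ fun s _ => continuous_apply s
  intro m hm
  by_cases ht : (∑ s, m s) = 0
  · have hv : htil V m = 0 := if_pos ht
    show Filter.Tendsto (htil V) _ _
    rw [hv]
    apply squeeze_zero_norm'
    · exact eventually_nhdsWithin_of_forall fun m' hm' => by
        simpa [Real.norm_eq_abs] using abs_htil_le hM' hm'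
    · have h0 : Filter.Tendsto (fun m' : S → ℝ => max M 0 * ∑ s, m' s) (nhds m)
          (nhds (max M 0 * ∑ s, m s)) := (continuous_const.mul hsum).tendsto m
      rw [ht, mul_zero] at h0
      exact h0.mono_left nhdsWithin_le_nhds
  · apply ContinuousAt.continuousWithinAt
    have hopen : IsOpen {m' : S → ℝ | (∑ s, m' s) ≠ 0} :=
      isOpen_compl_singleton.preimage hsum
    have heq : (fun m' : S → ℝ => (∑ s, m' s) * V (fun s => m' s / ∑ s', m' s')) =ᶠ[nhds m]
        htil V := by
      filter_upwards [hopen.mem_nhds ht] with m' hm'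
      exact (if_neg hm').symm
    refine ContinuousAt.congr ?_ heq
    have hinner : ContinuousAt (fun m' : S → ℝ => (fun s => m' s / ∑ s', m' s')) m :=
      continuousAt_pi.mpr fun s => ((continuous_apply s).continuousAt).div (hsum.continuousAt) ht
    exact (hsum.continuousAt).mul ((hVct.continuousAt).comp hinner)

end HtilCont

section PiMeas

open Function

variable {ι : Type*} [Fintype ι] {γ : ι → Type*} [∀ i, MeasurableSpace (γ i)]

lemma map_eval_pi (ν : ∀ i, Measure (γ i)) [∀ i, IsProbabilityMeasure (ν i)] (i : ι) :
    (Measure.pi ν).map (Function.eval i) = ν i := by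
  classical
  refine Measure.ext fun A hA => ?_
  rw [Measure.map_apply (measurable_pi_apply i) hA, Set.eval_preimage, Measure.pi_pi,
    Fintype.prod_eq_single i (fun j hj => by rw [Function.update_of_ne hj]; exact measure_univ),
    Function.update_self]

lemma ae_pi_mem (ν : ∀ i, Measure (γ i)) [∀ i, IsProbabilityMeasure (ν i)]
    (X : ∀ i, Set (γ i)) (hXm : ∀ i, MeasurableSet (X i)) (hX1 : ∀ i, ν i (X i) = 1) :
    ∀ᵐ x ∂Measure.pi ν, ∀ i, x i ∈ X i := by
  have h1 : Measure.pi ν (Set.pi Set.univ X) = 1 := by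
    rw [Measure.pi_pi]; simp [hX1]
  rw [ae_iff]
  refine measure_mono_null ?_ (?_ : Measure.pi ν (Set.pi Set.univ X)ᶜ = 0)
  · intro x hx
    simp only [Set.mem_setOf_eq] at hx
    exact fun hmem => hx fun i => hmem i (Set.mem_univ i)
  · rw [measure_compl (MeasurableSet.univ_pi hXm) (measure_ne_top _ _), measure_univ, h1,
      tsub_self]

lemma pi_dirac (x : ∀ i, γ i) :
    Measure.pi (fun i => Measure.dirac (x i)) = Measure.dirac x := by
  classical
  haveI : ∀ i, SigmaFinite (Measure.dirac (x i)) := fun i => inferInstance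
  refine Measure.pi_eq fun A hA => ?_
  rw [Measure.dirac_apply' _ (MeasurableSet.univ_pi hA)]
  by_cases h : ∀ i, x i ∈ A i
  · have hmem : x ∈ Set.pi Set.univ A := fun i _ => h i
    have h1 : ∀ i, Measure.dirac (x i) (A i) = 1 := fun i => Measure.dirac_apply_of_mem (h i)
    rw [Set.indicator_of_mem hmem]
    simp [h1]
  · push_neg at h
    obtain ⟨i0, hi0⟩ := h
    have hnmem : x ∉ Set.pi Set.univ A := fun hx => hi0 (hx i0 (Set.mem_univ i0))
    rw [Set.indicator_of_notMem hnmem]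
    exact (Finset.prod_eq_zero (Finset.mem_univ i0)
      (by rw [Measure.dirac_apply' _ (hA i0), Set.indicator_of_notMem hi0])).symm

end PiMeas

section Core

set_option linter.unusedSectionVars false

variable {S Z : Type*} [Fintype S] [Fintype Z]

lemma integrable_sum_bTerm {V : (S → ℝ) → ℝ} (hVct : Continuous V) {M : ℝ} (hM0 : 0 ≤ M)
    (hM : ∀ x ∈ stdSimplex ℝ S, |V x| ≤ M) {b : S → ℝ} (hb : b ∈ stdSimplex ℝ S)
    {pb cc : S → (S × Z) → ℝ} {ν : S → Measure (((S × Z) → ℝ) × ((S × Z) → ℝ))}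
    (hν : ∀ s, ν s ∈ DasSet (pb s) (cc s)) :
    Integrable (fun x : S → ((S × Z) → ℝ) × ((S × Z) → ℝ) =>
      ∑ z, bTerm V b (fun s => (x s).1) z) (Measure.pi ν) := by
  haveI := fun s => (hν s).1
  have hae := ae_pi_mem ν (fun s => XasSet (pb s)) (fun s => (isClosed_XasSet _).measurableSet)
    (fun s => (hν s).2.1)
  refine Integrable.mono' (integrable_const ((Fintype.card Z : ℝ) * M))
    (Finset.measurable_sum _ fun z _ =>
      ((measurable_bTerm V hVct b z).comp measurable_F)).aestronglyMeasurable ?_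
  filter_upwards [hae] with x hx
  rw [Real.norm_eq_abs]
  exact abs_sum_bTerm_le hM0 hM hb (fun s => (hx s).2.2)

lemma jensen_pi {V : (S → ℝ) → ℝ} (hVct : Continuous V)
    (hVcv : ConvexOn ℝ (stdSimplex ℝ S) V)
    {M : ℝ} (hM0 : 0 ≤ M) (hM : ∀ x ∈ stdSimplex ℝ S, |V x| ≤ M)
    {b : S → ℝ} (hb : b ∈ stdSimplex ℝ S)
    {pb cc : S → (S × Z) → ℝ} {ν : S → Measure (((S × Z) → ℝ) × ((S × Z) → ℝ))}
    (hν : ∀ s, ν s ∈ DasSet (pb s) (cc s)) :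
    (∑ z, bTerm V b (fun s => ∫ y, y.1 ∂ν s) z) ≤
      ∫ x, ∑ z, bTerm V b (fun s => (x s).1) z ∂(Measure.pi ν) := by
  classical
  haveI := fun s => (hν s).1
  set K : Set (S → (S × Z) → ℝ) := Set.pi Set.univ (fun _ => stdSimplex ℝ (S × Z)) with hKdef
  set g : (S → (S × Z) → ℝ) → ℝ := fun q => ∑ z, htil V (mvec b q z) with hgdef
  have hgb : ∀ q, g q = ∑ z, bTerm V b q z := fun q =>
    Finset.sum_congr rfl fun z _ => (bTerm_eq_htil V b q z).symm
  have hKmem : ∀ q : S → (S × Z) → ℝ, q ∈ K → ∀ s, q s ∈ stdSimplex ℝ (S × Z) :=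
    fun q hq s => hq s (Set.mem_univ s)
  have hgconv : ConvexOn ℝ K g := by
    refine ⟨convex_pi fun i _ => convex_stdSimplex ℝ (S × Z), ?_⟩
    intro q1 hq1 q2 hq2 lam mu hl hm hs
    simp only [hgdef, smul_eq_mul]
    have hmv : ∀ z, mvec b (lam • q1 + mu • q2) z =
        fun s' => lam * mvec b q1 z s' + mu * mvec b q2 z s' := by
      intro z; funext s'
      simp only [mvec, Pi.add_apply, Pi.smul_apply, smul_eq_mul, add_mul,
        Finset.sum_add_distrib, Finset.mul_sum, mul_assoc]
    calc (∑ z, htil V (mvec b (lam • q1 + mu • q2) z))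
        ≤ ∑ z, (lam * htil V (mvec b q1 z) + mu * htil V (mvec b q2 z)) :=
          Finset.sum_le_sum fun z _ => by
            rw [hmv z]
            exact htil_comb hVcv (mvec_nonneg hb (hKmem q1 hq1) z)
              (mvec_nonneg hb (hKmem q2 hq2) z) hl hm hs
      _ = lam * ∑ z, htil V (mvec b q1 z) + mu * ∑ z, htil V (mvec b q2 z) := by
          rw [Finset.sum_add_distrib, ← Finset.mul_sum, ← Finset.mul_sum]
  have hgcont : ContinuousOn g K := by
    intro q hq
    apply tendsto_finset_sum
    intro z _
    have hmvcont : Continuous fun q' : S → (S × Z) → ℝ => mvec b q' z :=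
      continuous_pi fun s' => continuous_finset_sum _ fun s _ =>
        by fun_prop
    exact ((continuousOn_htil hVct).comp hmvcont.continuousOn
      fun q' hq' s' => mvec_nonneg hb (hKmem q' hq') z s') q hq
  have hKcl : IsClosed K := isClosed_set_pi fun i _ => isClosed_stdSimplex ℝ _
  have hae := ae_pi_mem ν (fun s => XasSet (pb s)) (fun s => (isClosed_XasSet _).measurableSet)
    (fun s => (hν s).2.1)
  have hfs : ∀ᵐ x ∂(Measure.pi ν), (fun s => (x s).1) ∈ K := by
    filter_upwards [hae] with x hx
    exact fun s _ => (hx s).2.2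
  have hfi : Integrable (fun x : S → ((S × Z) → ℝ) × ((S × Z) → ℝ) => (fun s => (x s).1))
      (Measure.pi ν) := by
    refine Integrable.mono' (integrable_const 1) measurable_F.aestronglyMeasurable ?_
    filter_upwards [hae] with x hx
    rw [pi_norm_le_iff_of_nonneg zero_le_one]
    exact fun s => norm_le_one_of_mem_simplex (hx s).2.2
  have hgi : Integrable (g ∘ fun x : S → ((S × Z) → ℝ) × ((S × Z) → ℝ) => (fun s => (x s).1))
      (Measure.pi ν) := by
    refine (integrable_sum_bTerm hVct hM0 hM hb hν).congr ?_
    exact Filter.Eventually.of_forall fun x => (hgb _).symm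
  have key := hgconv.map_average_le hgcont hKcl hfs hfi hgi
  rw [average_eq_integral, average_eq_integral] at key
  have hintF : (∫ x, (fun s => (x s).1) ∂(Measure.pi ν)) = fun s => ∫ y, y.1 ∂ν s := by
    funext s
    have h1 : (∫ x, (fun s => (x s).1) ∂(Measure.pi ν)) s
        = ∫ x, (x s).1 ∂(Measure.pi ν) := by
      have h := ContinuousLinearMap.integral_comp_comm
        (ContinuousLinearMap.proj (R := ℝ) (φ := fun _ : S => (S × Z) → ℝ) s) hfi
      simpa [ContinuousLinearMap.proj_apply] using h.symm
    rw [h1, ← map_eval_pi ν s,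
      integral_map (measurable_pi_apply s).aemeasurable measurable_fst.aestronglyMeasurable]
  rw [hintF] at key
  calc (∑ z, bTerm V b (fun s => ∫ y, y.1 ∂ν s) z)
      = g (fun s => ∫ y, y.1 ∂ν s) := (hgb _).symm
    _ ≤ ∫ x, g (fun s => (x s).1) ∂(Measure.pi ν) := key
    _ = _ := integral_congr_ae (Filter.Eventually.of_forall fun x => hgb _)

end Core

section Final

set_option linter.unusedSectionVars false

variable {S Z A : Type*} [Fintype S] [Fintype Z]

lemma dirac_mem_das {pb cc : (S × Z) → ℝ} (hpb : pb ∈ stdSimplex ℝ (S × Z))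
    {p : (S × Z) → ℝ} (hp : p ∈ BasSet pb cc) :
    Measure.dirac (p, cc) ∈ DasSet pb cc := by
  have hmemX : ((p, cc) : ((S × Z) → ℝ) × ((S × Z) → ℝ)) ∈ XasSet pb :=
    ⟨fun i => (abs_sub_le_iff.mp (hp.2 i)).1, fun i => (abs_sub_le_iff.mp (hp.2 i)).2, hp.1⟩
  have hone : (fun x : ((S × Z) → ℝ) × ((S × Z) → ℝ) => x.2)
      =ᵐ[Measure.dirac (p, cc)] fun _ => cc := by
    rw [Filter.EventuallyEq, ae_iff]
    have hmeas : MeasurableSet {x : ((S × Z) → ℝ) × ((S × Z) → ℝ) | ¬ x.2 = cc} :=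
      (measurable_snd (measurableSet_singleton cc)).compl
    rw [Measure.dirac_apply' _ hmeas, Set.indicator_of_notMem (by simp)]
  refine ⟨inferInstance, Measure.dirac_apply_of_mem hmemX, (integrable_const cc).congr hone.symm, ?_⟩
  rw [integral_congr_ae hone, integral_const]
  simp

lemma pi_dirac_mem_da {pbar c : S → (S × Z) → ℝ} (hpb : ∀ s, pbar s ∈ stdSimplex ℝ (S × Z))
    {p : S → (S × Z) → ℝ} (hp : ∀ s, p s ∈ BasSet (pbar s) (c s)) :
    Measure.pi (fun s => Measure.dirac (p s, c s)) ∈ DaSet pbar c :=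
  ⟨fun s => Measure.dirac (p s, c s), fun s => dirac_mem_das (hpb s) (hp s), rfl⟩

lemma measurable_UVal_integrand (r : A → S → ℝ) (β : ℝ) {V : (S → ℝ) → ℝ}
    (hVct : Continuous V) (b : S → ℝ) (a : A) :
    Measurable fun x : S → ((S × Z) → ℝ) × ((S × Z) → ℝ) =>
      (∑ s, b s * r a s) + β * ∑ z, bTerm V b (fun s => (x s).1) z :=
  measurable_const.add ((Finset.measurable_sum _ fun z _ =>
    ((measurable_bTerm V hVct b z).comp measurable_F)).const_mul β)

lemma UVal_pi_dirac (r : A → S → ℝ) (β : ℝ) {V : (S → ℝ) → ℝ} (hVct : Continuous V)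
    (b : S → ℝ) (a : A) (p : S → (S × Z) → ℝ) (cs : S → (S × Z) → ℝ) :
    UVal r β V b a (Measure.pi (fun s => Measure.dirac (p s, cs s))) =
      (∑ s, b s * r a s) + β * ∑ z, bTerm V b p z := by
  rw [UVal, pi_dirac,
    integral_dirac' _ _ (measurable_UVal_integrand r β hVct b a).stronglyMeasurable]

lemma UVal_pi_eq (r : A → S → ℝ) (β : ℝ) {V : (S → ℝ) → ℝ} (hVct : Continuous V)
    {M : ℝ} (hM0 : 0 ≤ M) (hM : ∀ x ∈ stdSimplex ℝ S, |V x| ≤ M)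
    {b : S → ℝ} (hb : b ∈ stdSimplex ℝ S) (a : A)
    {pb cc : S → (S × Z) → ℝ} {ν : S → Measure (((S × Z) → ℝ) × ((S × Z) → ℝ))}
    (hν : ∀ s, ν s ∈ DasSet (pb s) (cc s)) :
    UVal r β V b a (Measure.pi ν) = (∑ s, b s * r a s) +
      β * ∫ x, ∑ z, bTerm V b (fun s => (x s).1) z ∂(Measure.pi ν) := by
  haveI := fun s => (hν s).1
  rw [UVal, integral_add (integrable_const _)
    ((integrable_sum_bTerm hVct hM0 hM hb hν).const_mul β), integral_const,
    integral_const_mul]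
  simp

lemma UVal_lower (r : A → S → ℝ) {β : ℝ} (hβ0 : 0 ≤ β) {V : (S → ℝ) → ℝ} (hVct : Continuous V)
    {M : ℝ} (hM0 : 0 ≤ M) (hM : ∀ x ∈ stdSimplex ℝ S, |V x| ≤ M)
    {b : S → ℝ} (hb : b ∈ stdSimplex ℝ S) (a : A)
    {pb cc : S → (S × Z) → ℝ} {μ : Measure (S → ((S × Z) → ℝ) × ((S × Z) → ℝ))}
    (hμ : μ ∈ DaSet pb cc) :
    (∑ s, b s * r a s) - β * ((Fintype.card Z : ℝ) * M) ≤ UVal r β V b a μ := by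
  obtain ⟨ν, hν, rfl⟩ := hμ
  haveI := fun s => (hν s).1
  rw [UVal_pi_eq r β hVct hM0 hM hb a hν]
  have hae := ae_pi_mem ν (fun s => XasSet (pb s)) (fun s => (isClosed_XasSet _).measurableSet)
    (fun s => (hν s).2.1)
  have hint : -(((Fintype.card Z : ℝ) * M)) ≤
      ∫ x, ∑ z, bTerm V b (fun s => (x s).1) z ∂(Measure.pi ν) := by
    have h := integral_mono_ae (μ := Measure.pi ν)
      (integrable_const (-((Fintype.card Z : ℝ) * M)))
      (integrable_sum_bTerm hVct hM0 hM hb hν) (by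
        filter_upwards [hae] with x hx
        exact neg_le_of_abs_le (abs_sum_bTerm_le hM0 hM hb fun s => (hx s).2.2))
    simpa using h
  have := mul_le_mul_of_nonneg_left hint hβ0
  linarith

end Final


/-- For a convex continuous value function `V` and any action `a`, the function
`Q(b) = inf_{μ̃ ∈ D̃_a} U_V(b,a,μ̃)` is convex in the belief state `b` on `Δ(S)`. -/
theorem Q_convex_in_belief {S Z A : Type*} [Fintype S] [Nonempty S]
    [Fintype Z] [Nonempty Z] [Fintype A] [Nonempty A]
    (pbar c : A → S → (S × Z) → ℝ)
    (hpbar : ∀ a s, pbar a s ∈ stdSimplex ℝ (S × Z))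
    (hc : ∀ a s i, 0 ≤ c a s i)
    (r : A → S → ℝ) (β : ℝ) (hβ0 : 0 < β) (hβ1 : β < 1)
    (V : (S → ℝ) → ℝ) (hVct : Continuous V) (hVcv : ConvexOn ℝ (stdSimplex ℝ S) V)
    (a : A) :
    ConvexOn ℝ (stdSimplex ℝ S)
      (fun b => sInf ((fun μ => UVal r β V b a μ) '' DaSet (pbar a) (c a))) := by
  classical
  obtain ⟨M0, hM0b⟩ := (isCompact_stdSimplex ℝ S).exists_bound_of_continuousOn hVct.continuousOn
  set M := max M0 0 with hMdef
  have hM0 : 0 ≤ M := le_max_right _ _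
  have hM : ∀ x ∈ stdSimplex ℝ S, |V x| ≤ M := fun x hx =>
    le_trans (by simpa [Real.norm_eq_abs] using hM0b x hx) (le_max_left _ _)
  have hpmem : ∀ s, pbar a s ∈ BasSet (pbar a s) (c a s) := fun s =>
    ⟨hpbar a s, fun i => by simpa using hc a s i⟩
  have hne : ∀ b : S → ℝ,
      ((fun μ => UVal r β V b a μ) '' DaSet (pbar a) (c a)).Nonempty :=
    fun b => ⟨_, ⟨_, pi_dirac_mem_da (hpbar a) hpmem, rfl⟩⟩
  have hbdd : ∀ b : S → ℝ, b ∈ stdSimplex ℝ S →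
      BddBelow ((fun μ => UVal r β V b a μ) '' DaSet (pbar a) (c a)) := by
    intro b hb
    refine ⟨(∑ s, b s * r a s) - β * ((Fintype.card Z : ℝ) * M), ?_⟩
    rintro v ⟨μ, hμ, rfl⟩
    exact UVal_lower r hβ0.le hVct hM0 hM hb a hμ
  refine ⟨convex_stdSimplex ℝ S, ?_⟩
  intro b1 hb1 b2 hb2 lam mu hl hm hs
  have hb : lam • b1 + mu • b2 ∈ stdSimplex ℝ S := (convex_stdSimplex ℝ S) hb1 hb2 hl hm hs
  set b := lam • b1 + mu • b2 with hbdef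
  have hbs : ∀ s, b s = lam * b1 s + mu * b2 s := fun s => by simp [hbdef]
  have key : ∀ μ1 ∈ DaSet (pbar a) (c a), ∀ μ2 ∈ DaSet (pbar a) (c a),
      sInf ((fun μ => UVal r β V b a μ) '' DaSet (pbar a) (c a)) ≤
        lam * UVal r β V b1 a μ1 + mu * UVal r β V b2 a μ2 := by
    intro μ1 hμ1 μ2 hμ2
    obtain ⟨ν1, hν1, rfl⟩ := hμ1
    obtain ⟨ν2, hν2, rfl⟩ := hμ2
    set p1 : S → (S × Z) → ℝ := fun s => ∫ y, y.1 ∂ν1 s with hp1def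
    set p2 : S → (S × Z) → ℝ := fun s => ∫ y, y.1 ∂ν2 s with hp2def
    have hp1 : ∀ s, p1 s ∈ BasSet (pbar a s) (c a s) := fun s => das_mean_mem (hν1 s)
    have hp2 : ∀ s, p2 s ∈ BasSet (pbar a s) (c a s) := fun s => das_mean_mem (hν2 s)
    set p : S → (S × Z) → ℝ := fun s =>
      if b s = 0 then pbar a s
      else (lam * b1 s / b s) • p1 s + (mu * b2 s / b s) • p2 s with hpdef
    have hzero : ∀ s, b s = 0 → lam * b1 s = 0 ∧ mu * b2 s = 0 := by
      intro s h0
      have h1 : 0 ≤ lam * b1 s := mul_nonneg hl (hb1.1 s)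
      have h2 : 0 ≤ mu * b2 s := mul_nonneg hm (hb2.1 s)
      have hsum0 : lam * b1 s + mu * b2 s = 0 := (hbs s) ▸ h0
      constructor <;> linarith
    have hpB : ∀ s, p s ∈ BasSet (pbar a s) (c a s) := by
      intro s
      simp only [hpdef]
      by_cases h0 : b s = 0
      · rw [if_pos h0]; exact hpmem s
      · rw [if_neg h0]
        have hbpos : 0 < b s := lt_of_le_of_ne (hb.1 s) (Ne.symm h0)
        have hw1 : 0 ≤ lam * b1 s / b s := div_nonneg (mul_nonneg hl (hb1.1 s)) hbpos.le
        have hw2 : 0 ≤ mu * b2 s / b s := div_nonneg (mul_nonneg hm (hb2.1 s)) hbpos.le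
        have hw : lam * b1 s / b s + mu * b2 s / b s = 1 := by
          rw [← add_div, ← hbs s, div_self h0]
        obtain ⟨⟨hx0, hx1⟩, hxb⟩ := hp1 s
        obtain ⟨⟨hy0, hy1⟩, hyb⟩ := hp2 s
        refine ⟨⟨fun i => ?_, ?_⟩, fun i => ?_⟩ <;>
          simp only [Pi.add_apply, Pi.smul_apply, smul_eq_mul]
        · exact add_nonneg (mul_nonneg hw1 (hx0 i)) (mul_nonneg hw2 (hy0 i))
        · rw [Finset.sum_add_distrib, ← Finset.mul_sum, ← Finset.mul_sum, hx1, hy1,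
            mul_one, mul_one, hw]
        · have hrw : lam * b1 s / b s * p1 s i + mu * b2 s / b s * p2 s i - pbar a s i =
              lam * b1 s / b s * (p1 s i - pbar a s i) +
              mu * b2 s / b s * (p2 s i - pbar a s i) := by
            linear_combination (pbar a s i) * hw
          calc |lam * b1 s / b s * p1 s i + mu * b2 s / b s * p2 s i - pbar a s i|
              = |lam * b1 s / b s * (p1 s i - pbar a s i) +
                 mu * b2 s / b s * (p2 s i - pbar a s i)| := by rw [hrw]
            _ ≤ |lam * b1 s / b s * (p1 s i - pbar a s i)| +
                 |mu * b2 s / b s * (p2 s i - pbar a s i)| := abs_add_le _ _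
            _ = lam * b1 s / b s * |p1 s i - pbar a s i| +
                 mu * b2 s / b s * |p2 s i - pbar a s i| := by
                rw [abs_mul, abs_mul, abs_of_nonneg hw1, abs_of_nonneg hw2]
            _ ≤ lam * b1 s / b s * c a s i + mu * b2 s / b s * c a s i :=
                add_le_add (mul_le_mul_of_nonneg_left (hxb i) hw1)
                  (mul_le_mul_of_nonneg_left (hyb i) hw2)
            _ = c a s i := by rw [← add_mul, hw, one_mul]
    have hmid : ∀ z, mvec b p z = fun s' => lam * mvec b1 p1 z s' + mu * mvec b2 p2 z s' := by
      intro z; funext s'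
      have hterm : ∀ s, p s (s', z) * b s =
          lam * (p1 s (s', z) * b1 s) + mu * (p2 s (s', z) * b2 s) := by
        intro s
        by_cases h0 : b s = 0
        · obtain ⟨hz1, hz2⟩ := hzero s h0
          rw [h0, mul_zero]
          have e1 : lam * (p1 s (s', z) * b1 s) = p1 s (s', z) * (lam * b1 s) := by ring
          have e2 : mu * (p2 s (s', z) * b2 s) = p2 s (s', z) * (mu * b2 s) := by ring
          rw [e1, e2, hz1, hz2, mul_zero, mul_zero, add_zero]
        · simp only [hpdef, if_neg h0, Pi.add_apply, Pi.smul_apply, smul_eq_mul]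
          field_simp
      show (∑ s, p s (s', z) * b s) = lam * mvec b1 p1 z s' + mu * mvec b2 p2 z s'
      rw [Finset.sum_congr rfl fun s _ => hterm s, Finset.sum_add_distrib,
        ← Finset.mul_sum, ← Finset.mul_sum]
      rfl
    have hμd := pi_dirac_mem_da (hpbar a) hpB
    have hC : (∑ s, b s * r a s) =
        lam * (∑ s, b1 s * r a s) + mu * (∑ s, b2 s * r a s) := by
      rw [Finset.mul_sum, Finset.mul_sum, ← Finset.sum_add_distrib]
      exact Finset.sum_congr rfl fun s _ => by rw [hbs s]; ring
    have hterm2 : ∀ z, bTerm V b p z ≤ lam * bTerm V b1 p1 z + mu * bTerm V b2 p2 z := by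
      intro z
      rw [bTerm_eq_htil, bTerm_eq_htil, bTerm_eq_htil, hmid z]
      exact htil_comb hVcv (mvec_nonneg hb1 (fun s => (hp1 s).1) z)
        (mvec_nonneg hb2 (fun s => (hp2 s).1) z) hl hm hs
    have hsumterm : (∑ z, bTerm V b p z) ≤
        lam * ∑ z, bTerm V b1 p1 z + mu * ∑ z, bTerm V b2 p2 z := by
      calc (∑ z, bTerm V b p z)
          ≤ ∑ z, (lam * bTerm V b1 p1 z + mu * bTerm V b2 p2 z) :=
            Finset.sum_le_sum fun z _ => hterm2 z
        _ = _ := by rw [Finset.sum_add_distrib, ← Finset.mul_sum, ← Finset.mul_sum]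
    have hJ1 : (∑ s, b1 s * r a s) + β * ∑ z, bTerm V b1 p1 z ≤
        UVal r β V b1 a (Measure.pi ν1) := by
      rw [UVal_pi_eq r β hVct hM0 hM hb1 a hν1]
      exact add_le_add_right
        (mul_le_mul_of_nonneg_left (jensen_pi hVct hVcv hM0 hM hb1 hν1) hβ0.le) _
    have hJ2 : (∑ s, b2 s * r a s) + β * ∑ z, bTerm V b2 p2 z ≤
        UVal r β V b2 a (Measure.pi ν2) := by
      rw [UVal_pi_eq r β hVct hM0 hM hb2 a hν2]
      exact add_le_add_right
        (mul_le_mul_of_nonneg_left (jensen_pi hVct hVcv hM0 hM hb2 hν2) hβ0.le) _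
    calc sInf ((fun μ => UVal r β V b a μ) '' DaSet (pbar a) (c a))
        ≤ UVal r β V b a (Measure.pi fun s => Measure.dirac (p s, c a s)) :=
          csInf_le (hbdd b hb) ⟨_, hμd, rfl⟩
      _ = (∑ s, b s * r a s) + β * ∑ z, bTerm V b p z :=
          UVal_pi_dirac r β hVct b a p (c a)
      _ ≤ (lam * (∑ s, b1 s * r a s) + mu * (∑ s, b2 s * r a s)) +
          β * (lam * ∑ z, bTerm V b1 p1 z + mu * ∑ z, bTerm V b2 p2 z) :=
          add_le_add (le_of_eq hC) (mul_le_mul_of_nonneg_left hsumterm hβ0.le)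
      _ = lam * ((∑ s, b1 s * r a s) + β * ∑ z, bTerm V b1 p1 z) +
          mu * ((∑ s, b2 s * r a s) + β * ∑ z, bTerm V b2 p2 z) := by ring
      _ ≤ lam * UVal r β V b1 a (Measure.pi ν1) + mu * UVal r β V b2 a (Measure.pi ν2) :=
          add_le_add (mul_le_mul_of_nonneg_left hJ1 hl) (mul_le_mul_of_nonneg_left hJ2 hm)
  simp only [smul_eq_mul]
  refine le_of_forall_pos_le_add fun ε hε => ?_
  obtain ⟨v1, hv1mem, hv1⟩ := Real.lt_sInf_add_pos (hne b1) hε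
  obtain ⟨v2, hv2mem, hv2⟩ := Real.lt_sInf_add_pos (hne b2) hε
  obtain ⟨μ1, hμ1, rfl⟩ := hv1mem
  obtain ⟨μ2, hμ2, rfl⟩ := hv2mem
  calc sInf ((fun μ => UVal r β V b a μ) '' DaSet (pbar a) (c a))
      ≤ lam * UVal r β V b1 a μ1 + mu * UVal r β V b2 a μ2 := key μ1 hμ1 μ2 hμ2
    _ ≤ lam * (sInf ((fun μ => UVal r β V b1 a μ) '' DaSet (pbar a) (c a)) + ε) +
        mu * (sInf ((fun μ => UVal r β V b2 a μ) '' DaSet (pbar a) (c a)) + ε) :=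
        add_le_add (mul_le_mul_of_nonneg_left hv1.le hl) (mul_le_mul_of_nonneg_left hv2.le hm)
    _ = lam * sInf ((fun μ => UVal r β V b1 a μ) '' DaSet (pbar a) (c a)) +
        mu * sInf ((fun μ => UVal r β V b2 a μ) '' DaSet (pbar a) (c a)) + ε := by
        linear_combination ε * hs
end
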